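/- Let V be a vector space over a field F and L : V → V a linear map. Let α ∈ V satisfy (L - id_V)^n(α) = 0 for some n ∈ ℕ, and let β = Q(L)(α) for some polynomial Q ∈ F[X]. Then either β ∈ range(L - id_V), or there exists a polynomial R ∈ F[X] with R(L)(β) = α (so that α and β generate the same cyclic F[X]-submodule). -/

import Mathlib

open Polynomial

/-- If `(L - id)^n α = 0` and `β = Q(L) α` for some polynomial `Q`,
then either `β ∈ range (L - id)` or there is a polynomial `R` with `R(L) β = α`
(so `α` and `β` generate the same cyclic `F[X]`-submodule). -/
theorem cyclic_generator_or_in_range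
    {F V : Type*} [Field F] [AddCommGroup V] [Module F V]
    (L : V →ₗ[F] V) (α : V) (n : ℕ)
    (hα : ((L - LinearMap.id : V →ₗ[F] V) ^ n) α = 0)
    (Q : F[X]) (β : V) (hβ : β = Polynomial.aeval L Q α) :
    β ∈ LinearMap.range (L - LinearMap.id : V →ₗ[F] V) ∨
      ∃ R : F[X], Polynomial.aeval L R β = α := by
  have haevalXC : Polynomial.aeval L (X - C 1 : F[X]) = L - LinearMap.id := by
    simp [map_sub, aeval_X, aeval_C, Algebra.algebraMap_eq_smul_one]
    rfl
  by_cases h : Q.eval 1 = 0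
  · -- X - 1 divides Q
    left
    have hdvd : (X - C 1 : F[X]) ∣ Q := dvd_iff_isRoot.2 h
    obtain ⟨S, hS⟩ := hdvd
    refine ⟨Polynomial.aeval L S α, ?_⟩
    rw [hβ, hS, map_mul, haevalXC]
    rfl
  · right
    have hirr : Irreducible (X - C (1 : F)) := irreducible_X_sub_C 1
    have hnd : ¬ (X - C (1 : F)) ∣ Q := fun hd => h (dvd_iff_isRoot.1 hd)
    have hcop : IsCoprime ((X - C (1 : F)) ^ n) Q :=
      ((hirr.prime.coprime_iff_not_dvd).2 hnd).pow_left
    obtain ⟨u, v, huv⟩ := hcop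
    refine ⟨v, ?_⟩
    have key : (Polynomial.aeval L u) (((L - LinearMap.id : V →ₗ[F] V) ^ n) α)
        + (Polynomial.aeval L v) ((Polynomial.aeval L Q) α) = α := by
      have := congrArg (fun P => Polynomial.aeval L P α) huv
      simp [map_add, map_mul, haevalXC, Module.End.mul_apply] at this
      exact this
    rw [hα, map_zero, zero_add] at key
    rw [hβ]
    exact key
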